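/- Let p be an odd prime with 3 | (p-1), let ω ∈ F_p be a primitive third root of unity, and let C be the cyclic code of length 3p over F_p with generator polynomial g(x) = (x-1)^5 (x-ω)^3 (x-ω^2)^2. Then the minimum Hamming distance of C equals 6. -/

import Mathlib

open Polynomial

/-- The cyclic code of length `n` over `F` with generator polynomial `g`
(with `g ∣ x^n - 1`), viewed as the set of coefficient vectors `c` whose
associated polynomial is divisible by `g`. -/
def cyclicCode {F : Type*} [Field F] (n : ℕ) (g : Polynomial F) :
    Set (Fin n → F) :=
  {c | g ∣ ∑ i : Fin n, C (c i) * X ^ (i : ℕ)}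

/-- Hamming weight of a vector. -/
def hammingWt {F : Type*} [Zero F] [DecidableEq F] {n : ℕ} (x : Fin n → F) : ℕ :=
  (Finset.univ.filter fun i => x i ≠ 0).card


lemma support_card_of_dvd {p : ℕ} [Fact p.Prime] :
    ∀ (N t : ℕ) (f : (ZMod p)[X]), f.natDegree ≤ N → f ≠ 0 → f.natDegree < p →
      (X - 1) ^ t ∣ f → t < f.support.card := by
  intro N
  induction N with
  | zero =>
    intro t f hN hf0 hdp hdvd
    match t with
    | 0 => simpa [Finset.card_pos, Polynomial.support_eq_empty] using hf0
    | (s+1) =>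
      exfalso
      have h1 : (X - 1 : (ZMod p)[X]) ∣ f := dvd_trans (dvd_pow_self _ (Nat.succ_ne_zero s)) hdvd
      have he : f.eval 1 = 0 := by
        obtain ⟨q, hq⟩ := h1
        simp [hq]
      have hfC : f = C (f.coeff 0) := Polynomial.eq_C_of_natDegree_eq_zero (by omega)
      rw [hfC] at he hf0
      simp at he
      simp [he] at hf0
  | succ n ih =>
    intro t f hN hf0 hdp hdvd
    match t with
    | 0 => simpa [Finset.card_pos, Polynomial.support_eq_empty] using hf0
    | (s+1) =>
      have h1 : (X - 1 : (ZMod p)[X]) ∣ f := dvd_trans (dvd_pow_self _ (Nat.succ_ne_zero s)) hdvd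
      have he : f.eval 1 = 0 := by
        obtain ⟨q, hq⟩ := h1
        simp [hq]
      have hnd : f.natDegree ≠ 0 := by
        intro h0
        have hfC : f = C (f.coeff 0) := Polynomial.eq_C_of_natDegree_eq_zero h0
        rw [hfC] at he hf0
        simp at he
        simp [he] at hf0
      by_cases h0 : f.coeff 0 = 0
      · -- X ∣ f
        obtain ⟨f₂, hf₂⟩ := Polynomial.X_dvd_iff.mpr h0
        have hX0 : (X : (ZMod p)[X]) ≠ 0 := Polynomial.X_ne_zero
        have hf₂0 : f₂ ≠ 0 := by rintro rfl; simp [hf₂] at hf0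
        have hdeg : f.natDegree = 1 + f₂.natDegree := by
          rw [hf₂, Polynomial.natDegree_mul hX0 hf₂0, Polynomial.natDegree_X]
        have hcop : IsCoprime (X - 1 : (ZMod p)[X]) X := ⟨-1, 1, by ring⟩
        have hdvd2 : (X - 1 : (ZMod p)[X]) ^ (s+1) ∣ f₂ :=
          (hcop.pow_left).dvd_of_dvd_mul_left (hf₂ ▸ hdvd)
        have hsupp : f.support = f₂.support.map ⟨fun n => n + 1, add_left_injective 1⟩ := by
          ext m
          simp only [Polynomial.mem_support_iff, Finset.mem_map, Function.Embedding.coeFn_mk]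
          match m with
          | 0 => simp [h0]
          | (k+1) =>
            rw [hf₂, Polynomial.coeff_X_mul]
            constructor
            · intro h; exact ⟨k, by simpa using h, rfl⟩
            · rintro ⟨a, ha, hak⟩
              obtain rfl : a = k := by omega
              exact ha
        have := ih (s+1) f₂ (by omega) hf₂0 (by omega) hdvd2
        rw [hsupp, Finset.card_map]
        exact this
      · -- derivative
        set d := derivative f with hd
        have hdd : (X - 1 : (ZMod p)[X]) ^ s ∣ d := by
          obtain ⟨q, hq⟩ := hdvd
          have hcalc : d = (X-1)^s * ((((s:ℕ)+1 : ℕ) : (ZMod p)[X]) * q + (X-1) * derivative q) := by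
            rw [hd, hq]
            simp [Polynomial.derivative_mul, Polynomial.derivative_pow]
            ring
          exact ⟨_, hcalc⟩
        have hnd1 : 1 ≤ f.natDegree := Nat.one_le_iff_ne_zero.mpr hnd
        have hcast : ((f.natDegree : ℕ) : ZMod p) ≠ 0 := by
          intro hcc
          rw [ZMod.natCast_eq_zero_iff] at hcc
          have := Nat.le_of_dvd (by omega) hcc
          omega
        have hdne : d ≠ 0 := by
          intro h
          have hc : d.coeff (f.natDegree - 1) = 0 := by rw [h]; simp
          rw [hd, Polynomial.coeff_derivative] at hc
          have h2 : ((f.natDegree - 1 : ℕ) : ZMod p) + 1 = ((f.natDegree : ℕ) : ZMod p) := by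
            have : f.natDegree - 1 + 1 = f.natDegree := by omega
            rw [← this]
            push_cast
            ring
          rw [show f.natDegree - 1 + 1 = f.natDegree by omega, h2] at hc
          rcases mul_eq_zero.mp hc with h' | h'
          · exact (Polynomial.leadingCoeff_ne_zero.mpr hf0) h'
          · exact hcast h'
        have hdlt : d.natDegree < f.natDegree := Polynomial.natDegree_derivative_lt hnd
        have hih := ih s d (by omega) hdne (by omega) hdd
        have hsub : d.support.image (· + 1) ⊆ f.support.erase 0 := by
          intro m hm
          simp only [Finset.mem_image] at hm
          obtain ⟨k, hk, rfl⟩ := hm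
          rw [Finset.mem_erase]
          refine ⟨by omega, ?_⟩
          rw [Polynomial.mem_support_iff] at hk ⊢
          rw [hd, Polynomial.coeff_derivative] at hk
          intro h
          rw [h] at hk
          simp at hk
        have h0mem : (0:ℕ) ∈ f.support := Polynomial.mem_support_iff.mpr h0
        have hcard1 : (d.support.image (· + 1)).card = d.support.card :=
          Finset.card_image_of_injective _ (add_left_injective 1)
        have hcard2 : (f.support.erase 0).card = f.support.card - 1 :=
          Finset.card_erase_of_mem h0mem
        have hcard3 := Finset.card_le_card hsub
        have hpos : 1 ≤ f.support.card := Finset.card_pos.mpr ⟨0, h0mem⟩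
        omega

def idx3 (p : ℕ) (r : Fin 3) (j : Fin p) : Fin (3 * p) :=
  ⟨3 * (j : ℕ) + (r : ℕ), by have := j.isLt; have := r.isLt; omega⟩

noncomputable def fpart {p : ℕ} (c : Fin (3 * p) → ZMod p) (r : Fin 3) : (ZMod p)[X] :=
  ∑ j : Fin p, C (c (idx3 p r j)) * X ^ (j : ℕ)

lemma coeff_fpart {p : ℕ} (c : Fin (3 * p) → ZMod p) (r : Fin 3) (m : ℕ) :
    (fpart c r).coeff m = if h : m < p then c (idx3 p r ⟨m, h⟩) else 0 := by
  unfold fpart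
  rw [Polynomial.finset_sum_coeff]
  simp only [Polynomial.coeff_C_mul, Polynomial.coeff_X_pow]
  split
  · next h =>
    rw [Finset.sum_eq_single (⟨m, h⟩ : Fin p)]
    · simp
    · intro j _ hj
      have : (j : ℕ) ≠ m := fun he => hj (Fin.ext he)
      simp [eq_comm, this]
      exact fun he => absurd he.symm this
    · simp
  · next h =>
    apply Finset.sum_eq_zero
    intro j _
    have : (j : ℕ) ≠ m := by have := j.isLt; omega
    simp [eq_comm, this]
    exact fun he => absurd he.symm this

lemma natDegree_fpart {p : ℕ} [Fact p.Prime] (c : Fin (3 * p) → ZMod p) (r : Fin 3) :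
    (fpart c r).natDegree < p := by
  have hp : 0 < p := (Fact.out (p := p.Prime)).pos
  haveI : Nontrivial (ZMod p) := by
    haveI : Fact (1 < p) := ⟨(Fact.out (p := p.Prime)).one_lt⟩
    infer_instance
  have : (fpart c r).natDegree ≤ p - 1 := by
    apply Polynomial.natDegree_sum_le_of_forall_le
    intro j _
    calc (C (c (idx3 p r j)) * X ^ (j:ℕ)).natDegree ≤ (X ^ (j:ℕ) : (ZMod p)[X]).natDegree :=
          Polynomial.natDegree_C_mul_le _ _
      _ ≤ p - 1 := by rw [Polynomial.natDegree_X_pow]; have := j.isLt; omega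
  omega

lemma idx3_bijective (p : ℕ) :
    Function.Bijective (fun rj : Fin 3 × Fin p => idx3 p rj.1 rj.2) := by
  rw [Fintype.bijective_iff_injective_and_card]
  constructor
  · rintro ⟨r, j⟩ ⟨r', j'⟩ h
    have hval : 3 * (j:ℕ) + (r:ℕ) = 3 * (j':ℕ) + (r':ℕ) := congrArg Fin.val h
    have hr := r.isLt; have hr' := r'.isLt
    have : (r:ℕ) = (r':ℕ) ∧ (j:ℕ) = (j':ℕ) := by omega
    exact Prod.ext (Fin.ext this.1) (Fin.ext this.2)
  · simp

lemma sum_decomp {p : ℕ} (c : Fin (3 * p) → ZMod p) :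
    ∑ i : Fin (3 * p), C (c i) * X ^ (i : ℕ)
      = ∑ r : Fin 3, X ^ (r : ℕ) * ((fpart c r).comp (X ^ 3)) := by
  have hcomp : ∀ r, (fpart c r).comp (X ^ 3)
      = ∑ j : Fin p, C (c (idx3 p r j)) * X ^ (3 * (j:ℕ)) := by
    intro r
    unfold fpart
    simp [Polynomial.comp, Polynomial.eval₂_finset_sum, ← pow_mul]
  calc ∑ i : Fin (3 * p), C (c i) * X ^ (i : ℕ)
      = ∑ rj : Fin 3 × Fin p, C (c (idx3 p rj.1 rj.2)) * X ^ (3 * (rj.2:ℕ) + (rj.1:ℕ)) := by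
        refine (Fintype.sum_bijective _ (idx3_bijective p) _ _ ?_).symm
        intro ⟨r, j⟩
        rfl
    _ = ∑ r : Fin 3, X ^ (r : ℕ) * ((fpart c r).comp (X ^ 3)) := by
        rw [Fintype.sum_prod_type]
        refine Finset.sum_congr rfl fun r _ => ?_
        rw [hcomp r, Finset.mul_sum]
        refine Finset.sum_congr rfl fun j _ => ?_
        rw [pow_add]
        ring

lemma wt_decomp {p : ℕ} [DecidableEq (ZMod p)] (c : Fin (3 * p) → ZMod p) :
    (Finset.univ.filter fun i => c i ≠ 0).card
      = ∑ r : Fin 3, (fpart c r).support.card := by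
  have hsupp : ∀ r : Fin 3, (fpart c r).support
      = (Finset.univ.filter fun j : Fin p => c (idx3 p r j) ≠ 0).image Fin.val := by
    intro r
    ext m
    simp only [Polynomial.mem_support_iff, Finset.mem_image, Finset.mem_filter,
      Finset.mem_univ, true_and, coeff_fpart]
    constructor
    · intro h
      split at h
      · next hlt => exact ⟨⟨m, hlt⟩, h, rfl⟩
      · exact absurd rfl h
    · rintro ⟨j, hj, rfl⟩
      simp [j.isLt, hj]
  have hcard : ∀ r : Fin 3, (fpart c r).support.card
      = (Finset.univ.filter fun j : Fin p => c (idx3 p r j) ≠ 0).card := by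
    intro r
    rw [hsupp r, Finset.card_image_of_injective _ Fin.val_injective]
  simp only [hcard, Finset.card_filter]
  trans (∑ rj : Fin 3 × Fin p, if c (idx3 p rj.1 rj.2) ≠ 0 then (1:ℕ) else 0)
  · refine (Fintype.sum_bijective _ (idx3_bijective p) _ _ ?_).symm
    intro ⟨r, j⟩
    rfl
  · exact Fintype.sum_prod_type (f := fun rj : Fin 3 × Fin p => if c (idx3 p rj.1 rj.2) ≠ 0 then (1:ℕ) else 0)

lemma aux_upper (p : ℕ) [Fact p.Prime] (h7 : 7 ≤ p)
    (h5ne : ((5:ℕ) : ZMod p) ≠ 0) (h10ne : ((10:ℕ) : ZMod p) ≠ 0)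
    (ω : ZMod p) (hω3 : ω ^ 3 = 1) (hω1 : ω ≠ 1)
    (hsum : ω ^ 2 + ω + 1 = 0) :
    ∃ c ∈ cyclicCode (3 * p)
        ((X - 1) ^ 5 * (X - C ω) ^ 3 * (X - C (ω ^ 2)) ^ 2),
      c ≠ 0 ∧ hammingWt c = 6 := by
  haveI : Fact (1 < p) := ⟨by omega⟩
  set q : (ZMod p)[X] := ((X : (ZMod p)[X]) ^ 3 - 1) ^ 5 with hq
  have h3p : 21 ≤ 3 * p := by omega
  -- factorization of X^3 - 1
  have hCsum : (C ω) ^ 2 + C ω + 1 = (0 : (ZMod p)[X]) := by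
    have := congrArg C hsum
    simpa using this
  have hC3 : (C ω) ^ 3 = (1 : (ZMod p)[X]) := by
    have := congrArg C hω3
    simpa using this
  have hfac3 : ((X : (ZMod p)[X]) ^ 3 - 1) = (X - 1) * (X - C ω) * (X - C (ω ^ 2)) := by
    have h2 : C (ω ^ 2) = (C ω) ^ 2 := by rw [map_pow]
    rw [h2]
    linear_combination (X ^ 2 - C ω * X) * hCsum + hC3
  -- divisibility
  have hdvd : (X - 1) ^ 5 * (X - C ω) ^ 3 * (X - C (ω ^ 2)) ^ 2 ∣ q := by
    rw [hq, hfac3, mul_pow, mul_pow]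
    exact mul_dvd_mul (mul_dvd_mul dvd_rfl (pow_dvd_pow _ (by norm_num)))
      (pow_dvd_pow _ (by norm_num))
  -- degree
  have hdeg : q.natDegree < 3 * p := by
    have h1 : ((X : (ZMod p)[X]) ^ 3 - 1).natDegree ≤ 3 := by
      refine le_trans (Polynomial.natDegree_sub_le _ _) ?_
      simp [Polynomial.natDegree_X_pow]
    have h2 : q.natDegree ≤ 5 * 3 := by
      refine le_trans (Polynomial.natDegree_pow_le) ?_
      omega
    omega
  -- q as sum
  have hq_sum : ∑ i : Fin (3 * p), C (q.coeff i) * X ^ (i : ℕ) = q := by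
    conv_rhs => rw [Polynomial.as_sum_range' q (3 * p) hdeg]
    rw [Fin.sum_univ_eq_sum_range (fun i => C (q.coeff i) * X ^ i)]
    exact Finset.sum_congr rfl fun i _ => Polynomial.C_mul_X_pow_eq_monomial
  -- explicit expansion
  have qexp : q = C (-1) + C 5 * X ^ 3 + C (-10) * X ^ 6 + C 10 * X ^ 9
      + C (-5) * X ^ 12 + C 1 * X ^ 15 := by
    rw [hq]
    simp only [map_neg, map_one, map_ofNat]
    ring
  have hcoeff : ∀ n : ℕ, q.coeff n =
      if n = 0 then -1 else if n = 3 then 5 else if n = 6 then -10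
      else if n = 9 then 10 else if n = 12 then -5 else if n = 15 then 1 else 0 := by
    intro n
    rw [qexp]
    simp only [Polynomial.coeff_add, Polynomial.coeff_C_mul, Polynomial.coeff_X_pow,
      Polynomial.coeff_C]
    by_cases h0 : n = 0
    · subst h0; norm_num
    by_cases h3' : n = 3
    · subst h3'; norm_num
    by_cases h6 : n = 6
    · subst h6; norm_num
    by_cases h9 : n = 9
    · subst h9; norm_num
    by_cases h12 : n = 12
    · subst h12; norm_num
    by_cases h15 : n = 15
    · subst h15; norm_num
    simp [h0, h3', h6, h9, h12, h15]
  have h5 : (5 : ZMod p) ≠ 0 := by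
    have : ((5:ℕ) : ZMod p) = (5 : ZMod p) := by norm_cast
    rw [← this]; exact h5ne
  have h10 : (10 : ZMod p) ≠ 0 := by
    have : ((10:ℕ) : ZMod p) = (10 : ZMod p) := by norm_cast
    rw [← this]; exact h10ne
  refine ⟨fun i => q.coeff i, ?_, ?_, ?_⟩
  · simp only [cyclicCode, Set.mem_setOf_eq]
    rw [hq_sum]
    exact hdvd
  · intro h
    have := congrFun h ⟨0, by omega⟩
    simp only [Pi.zero_apply] at this
    rw [hcoeff] at this
    norm_num at this
  · unfold hammingWt
    have hset : (Finset.univ.filter fun i : Fin (3*p) => q.coeff i ≠ 0)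
        = ({⟨0, by omega⟩, ⟨3, by omega⟩, ⟨6, by omega⟩, ⟨9, by omega⟩,
            ⟨12, by omega⟩, ⟨15, by omega⟩} : Finset (Fin (3*p))) := by
      ext i
      simp only [Finset.mem_filter, Finset.mem_univ, true_and, Finset.mem_insert,
        Finset.mem_singleton, Fin.ext_iff]
      rw [hcoeff]
      split_ifs with h0 h3' h6 h9 h12 h15
      · simp [h0, neg_ne_zero]
      · simp [h3', h5]
      · simp [h6, neg_ne_zero, h10]
      · simp [h9, h10]
      · simp [h12, neg_ne_zero, h5]
      · simp [h15]
      · simp [h0, h3', h6, h9, h12, h15]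
    rw [hset]
    rw [Finset.card_insert_of_notMem (by simp [Fin.ext_iff]),
      Finset.card_insert_of_notMem (by simp [Fin.ext_iff]),
      Finset.card_insert_of_notMem (by simp [Fin.ext_iff]),
      Finset.card_insert_of_notMem (by simp [Fin.ext_iff]),
      Finset.card_insert_of_notMem (by simp [Fin.ext_iff]),
      Finset.card_singleton]


lemma aux_lower (p : ℕ) [Fact p.Prime] (h7 : 7 ≤ p)
    (h3ne : ((3:ℕ) : ZMod p) ≠ 0)
    (ω : ZMod p) (hω3 : ω ^ 3 = 1) (hω1 : ω ≠ 1)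
    (hsum : ω ^ 2 + ω + 1 = 0) (hωne0 : ω ≠ 0) (hω23 : (ω ^ 2) ^ 3 = 1)
    (c : Fin (3 * p) → ZMod p)
    (hmemc : ((X - 1) ^ 5 * (X - C ω) ^ 3 * (X - C (ω ^ 2)) ^ 2 : (ZMod p)[X])
      ∣ ∑ i : Fin (3 * p), C (c i) * X ^ (i : ℕ))
    (hc0 : c ≠ 0) :
    6 ≤ (Finset.univ.filter fun i => c i ≠ 0).card := by
  classical
  haveI : Fact (1 < p) := ⟨by omega⟩
  set P : (ZMod p)[X] := ∑ i : Fin (3 * p), C (c i) * X ^ (i : ℕ) with hPdef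
  set F : Fin 3 → (ZMod p)[X] := fpart c with hFdef
  have hFdeg : ∀ r, (F r).natDegree < p := fun r => natDegree_fpart c r
  have hPdecomp : P = ∑ r : Fin 3, X ^ (r : ℕ) * ((F r).comp (X ^ 3)) := sum_decomp c
  have hX1ne : (X - 1 : (ZMod p)[X]) ≠ 0 := by
    have := Polynomial.X_sub_C_ne_zero (1 : ZMod p)
    rwa [map_one] at this
  -- some component is nonzero
  have hex : ∃ r, F r ≠ 0 := by
    obtain ⟨i, hi⟩ := Function.ne_iff.mp hc0
    have hjlt : (i : ℕ) / 3 < p := by have := i.isLt; omega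
    have hrlt : (i : ℕ) % 3 < 3 := Nat.mod_lt _ (by norm_num)
    refine ⟨⟨(i:ℕ) % 3, hrlt⟩, fun h0 => ?_⟩
    have hidx : idx3 p ⟨(i:ℕ) % 3, hrlt⟩ ⟨(i:ℕ) / 3, hjlt⟩ = i := by
      apply Fin.ext
      show 3 * ((i:ℕ)/3) + (i:ℕ) % 3 = (i:ℕ)
      omega
    have hco := coeff_fpart c ⟨(i:ℕ) % 3, hrlt⟩ ((i:ℕ) / 3)
    rw [show fpart c ⟨(i:ℕ) % 3, hrlt⟩ = F ⟨(i:ℕ) % 3, hrlt⟩ from rfl, h0,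
      Polynomial.coeff_zero, dif_pos hjlt, hidx] at hco
    exact hi hco.symm
  set S : Finset (Fin 3) := Finset.univ.filter (fun r => F r ≠ 0) with hSdef
  have hSne : S.Nonempty := hex.elim fun r hr => ⟨r, by simp [hSdef, hr]⟩
  set t : ℕ := S.inf' hSne (fun r => rootMultiplicity 1 (F r)) with htdef
  have hdvd_t : ∀ r, (X - 1 : (ZMod p)[X]) ^ t ∣ F r := by
    intro r
    by_cases h : F r = 0
    · simp [h]
    · have hmem : r ∈ S := by simp [hSdef, h]
      have hle : t ≤ rootMultiplicity 1 (F r) := Finset.inf'_le _ hmem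
      have h1 : (X - C 1 : (ZMod p)[X]) ^ rootMultiplicity 1 (F r) ∣ F r :=
        Polynomial.pow_rootMultiplicity_dvd _ _
      rw [map_one] at h1
      exact dvd_trans (pow_dvd_pow _ hle) h1
  obtain ⟨r₁, hr₁S, hr₁t⟩ := Finset.exists_mem_eq_inf' hSne (fun r => rootMultiplicity 1 (F r))
  have hr₁ne0 : F r₁ ≠ 0 := by
    have := hr₁S
    simp [hSdef] at this
    exact this
  choose Q hQ using hdvd_t
  have hQr₁ : (Q r₁).eval 1 ≠ 0 := by
    intro h0
    have hdvd1 : (X - 1 : (ZMod p)[X]) ∣ Q r₁ := by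
      have := (Polynomial.dvd_iff_isRoot (p := Q r₁) (a := 1)).mpr h0
      rwa [map_one] at this
    obtain ⟨k, hk⟩ := hdvd1
    have hdd : (X - 1 : (ZMod p)[X]) ^ (t + 1) ∣ F r₁ :=
      ⟨k, by rw [hQ r₁, hk, pow_succ]; ring⟩
    have hle : t + 1 ≤ rootMultiplicity 1 (F r₁) := by
      rw [Polynomial.le_rootMultiplicity_iff hr₁ne0, map_one]
      exact hdd
    omega
  -- vanishing conditions
  have hvan : ∀ ζ : ZMod p, ζ ^ 3 = 1 → ∀ e : ℕ, t < e → (X - C ζ) ^ e ∣ P →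
      (Q 0).eval 1 + ζ * (Q 1).eval 1 + ζ ^ 2 * (Q 2).eval 1 = 0 := by
    intro ζ hζ e hte hdvdP
    obtain ⟨k, hk⟩ := hdvdP
    have hcompdvd : ((X - C ζ).comp (C ζ * X)) ^ e ∣ P.comp (C ζ * X) :=
      ⟨k.comp (C ζ * X), by rw [hk, Polynomial.mul_comp, Polynomial.pow_comp]⟩
    have hXc : (X - C ζ).comp (C ζ * X) = C ζ * (X - 1) := by
      simp [Polynomial.sub_comp]
      ring
    rw [hXc, mul_pow] at hcompdvd
    have hdvd2 : (X - 1 : (ZMod p)[X]) ^ e ∣ P.comp (C ζ * X) :=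
      dvd_trans (Dvd.intro_left _ rfl) hcompdvd
    have hX3comp : ((X : (ZMod p)[X]) ^ 3).comp (C ζ * X) = X ^ 3 := by
      rw [Polynomial.pow_comp, Polynomial.X_comp, mul_pow, ← map_pow, hζ, map_one, one_mul]
    have hPcomp : P.comp (C ζ * X) = (X - 1) ^ t *
        ((X ^ 2 + X + 1) ^ t * ∑ r : Fin 3, (C ζ * X) ^ (r:ℕ) * ((Q r).comp (X ^ 3))) := by
      rw [hPdecomp]
      have hsumcomp : (∑ r : Fin 3, X ^ (r:ℕ) * ((F r).comp (X ^ 3))).comp (C ζ * X)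
          = ∑ r : Fin 3, ((X ^ (r:ℕ) * ((F r).comp (X ^ 3))).comp (C ζ * X)) := by
        simp [Polynomial.comp, Polynomial.eval₂_finset_sum]
      rw [hsumcomp]
      have hterm : ∀ r : Fin 3, (X ^ (r:ℕ) * ((F r).comp (X ^ 3))).comp (C ζ * X)
          = (X - 1) ^ t * ((X ^ 2 + X + 1) ^ t * ((C ζ * X) ^ (r:ℕ) * ((Q r).comp (X ^ 3)))) := by
        intro r
        have hfac : ((X : (ZMod p)[X]) ^ 3 - 1) = (X - 1) * (X ^ 2 + X + 1) := by ring
        calc (X ^ (r:ℕ) * ((F r).comp (X ^ 3))).comp (C ζ * X)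
            = (C ζ * X) ^ (r:ℕ) * ((F r).comp ((X ^ 3).comp (C ζ * X))) := by
              rw [Polynomial.mul_comp, Polynomial.pow_comp, Polynomial.X_comp,
                Polynomial.comp_assoc]
          _ = (C ζ * X) ^ (r:ℕ) * ((((X:(ZMod p)[X]) - 1) ^ t * Q r).comp (X ^ 3)) := by
              rw [hX3comp, ← hQ r]
          _ = (C ζ * X) ^ (r:ℕ) * ((((X:(ZMod p)[X]) - 1).comp (X ^ 3)) ^ t * ((Q r).comp (X ^ 3))) := by
              rw [Polynomial.mul_comp, Polynomial.pow_comp]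
          _ = (C ζ * X) ^ (r:ℕ) * ((((X:(ZMod p)[X]) ^ 3 - 1)) ^ t * ((Q r).comp (X ^ 3))) := by
              rw [Polynomial.sub_comp, Polynomial.X_comp, Polynomial.one_comp]
          _ = (C ζ * X) ^ (r:ℕ) * ((((X:(ZMod p)[X]) - 1) * (X ^ 2 + X + 1)) ^ t * ((Q r).comp (X ^ 3))) := by
              rw [hfac]
          _ = (X - 1) ^ t * ((X ^ 2 + X + 1) ^ t * ((C ζ * X) ^ (r:ℕ) * ((Q r).comp (X ^ 3)))) := by
              rw [mul_pow ((X:(ZMod p)[X]) - 1) (X ^ 2 + X + 1) t]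
              ring
      rw [Finset.sum_congr rfl fun r _ => hterm r, ← Finset.mul_sum, ← Finset.mul_sum]
    have hdvd3 : (X - 1 : (ZMod p)[X]) ^ (t + 1) ∣ (X - 1) ^ t *
        ((X ^ 2 + X + 1) ^ t * ∑ r : Fin 3, (C ζ * X) ^ (r:ℕ) * ((Q r).comp (X ^ 3))) := by
      rw [← hPcomp]
      exact dvd_trans (pow_dvd_pow _ (by omega)) hdvd2
    have hcancel : (X - 1 : (ZMod p)[X]) ∣
        ((X ^ 2 + X + 1) ^ t * ∑ r : Fin 3, (C ζ * X) ^ (r:ℕ) * ((Q r).comp (X ^ 3))) := by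
      have h' : (X - 1 : (ZMod p)[X]) ^ t * (X - 1) ∣ (X - 1) ^ t *
          ((X ^ 2 + X + 1) ^ t * ∑ r : Fin 3, (C ζ * X) ^ (r:ℕ) * ((Q r).comp (X ^ 3))) := by
        rw [← pow_succ]
        exact hdvd3
      exact (mul_dvd_mul_iff_left (pow_ne_zero t hX1ne)).mp h'
    obtain ⟨v, hv⟩ := hcancel
    have hUeval : (((X:(ZMod p)[X]) ^ 2 + X + 1) ^ t *
        ∑ r : Fin 3, (C ζ * X) ^ (r:ℕ) * ((Q r).comp (X ^ 3))).eval 1 = 0 := by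
      rw [hv]
      simp
    rw [Polynomial.eval_mul, Polynomial.eval_pow, Polynomial.eval_finset_sum] at hUeval
    simp only [Fin.sum_univ_three, Polynomial.eval_mul, Polynomial.eval_pow,
      Polynomial.eval_add, Polynomial.eval_one, Polynomial.eval_X, Polynomial.eval_C,
      Polynomial.eval_comp, Fin.val_zero, Fin.val_one, Fin.val_two,
      pow_zero, pow_one, one_pow, mul_one, one_mul] at hUeval
    -- hUeval : (1+1+1)^t * (... sum ...) = 0
    have h3cast : ((3:ℕ) : ZMod p) = 1 + 1 + 1 := by norm_num
    have h3pow : ((1:ZMod p) + 1 + 1) ^ t ≠ 0 := by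
      rw [← h3cast]
      exact pow_ne_zero _ h3ne
    rcases mul_eq_zero.mp hUeval with h' | h'
    · exact absurd h' h3pow
    · linear_combination h'
  have hd1 : (X - 1 : (ZMod p)[X]) ^ 5 ∣ P :=
    dvd_trans ⟨(X - C ω) ^ 3 * (X - C (ω ^ 2)) ^ 2, by ring⟩ hmemc
  have hdω : (X - C ω : (ZMod p)[X]) ^ 3 ∣ P :=
    dvd_trans ⟨(X - 1) ^ 5 * (X - C (ω ^ 2)) ^ 2, by ring⟩ hmemc
  have hdω2 : (X - C (ω ^ 2) : (ZMod p)[X]) ^ 2 ∣ P :=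
    dvd_trans ⟨(X - 1) ^ 5 * (X - C ω) ^ 3, by ring⟩ hmemc
  -- weight bounds per component
  have hwtr : ∀ r, (Q r).eval 1 ≠ 0 → t + 1 ≤ (F r).support.card := by
    intro r h
    have hFne : F r ≠ 0 := by
      intro h0
      have hq0 : (X - 1 : (ZMod p)[X]) ^ t * Q r = 0 := by rw [← hQ r, h0]
      rcases mul_eq_zero.mp hq0 with h' | h'
      · exact pow_ne_zero t hX1ne h'
      · rw [h'] at h
        simp at h
    have hd := support_card_of_dvd (F r).natDegree t (F r) le_rfl hFne (hFdeg r) ⟨Q r, hQ r⟩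
    omega
  have htot : (Finset.univ.filter fun i => c i ≠ 0).card
      = (F 0).support.card + (F 1).support.card + (F 2).support.card := by
    have h := wt_decomp c
    rw [Fin.sum_univ_three] at h
    rw [← hFdef] at h
    exact h
  have h3ne' : (3 : ZMod p) ≠ 0 := by
    have : ((3:ℕ) : ZMod p) = (3 : ZMod p) := by norm_cast
    rw [← this]
    exact h3ne
  have hex2 : (Q 0).eval 1 ≠ 0 ∨ (Q 1).eval 1 ≠ 0 ∨ (Q 2).eval 1 ≠ 0 := by
    have hcases : r₁ = 0 ∨ r₁ = 1 ∨ r₁ = 2 := by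
      rcases r₁ with ⟨iv, hiv⟩
      simp only [Fin.ext_iff, Fin.val_zero, Fin.val_one, Fin.val_two]
      omega
    rcases hcases with h | h | h <;> rw [h] at hQr₁
    · exact Or.inl hQr₁
    · exact Or.inr (Or.inl hQr₁)
    · exact Or.inr (Or.inr hQr₁)
  have htcase : t ≤ 1 ∨ t = 2 ∨ (3 ≤ t ∧ t ≤ 4) ∨ 5 ≤ t := by omega
  rcases htcase with ht | ht | ht | ht
  · -- t ≤ 1 : impossible
    exfalso
    have eA := hvan 1 (one_pow 3) 5 (by omega) (by rw [map_one]; exact hd1)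
    have eB := hvan ω hω3 3 (by omega) hdω
    have eC := hvan (ω ^ 2) hω23 2 (by omega) hdω2
    have h30 : (3 : ZMod p) * ((Q 0).eval 1) = 0 := by
      linear_combination eA + eB + eC - ((Q 1).eval 1) * hsum - ((Q 2).eval 1) * hsum
        - ((Q 2).eval 1) * ω * hω3
    have h31 : (3 : ZMod p) * ((Q 1).eval 1) = 0 := by
      linear_combination eA + ω ^ 2 * eB + ω * eC - ((Q 0).eval 1) * hsum
        - 2 * ((Q 1).eval 1) * hω3 - ((Q 2).eval 1) * (ω + ω ^ 2) * hω3 - ((Q 2).eval 1) * hsum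
    have h32 : (3 : ZMod p) * ((Q 2).eval 1) = 0 := by
      linear_combination eA + ω * eB + ω ^ 2 * eC - ((Q 0).eval 1) * hsum
        - ((Q 1).eval 1) * hsum - ((Q 1).eval 1) * ω * hω3 - ((Q 2).eval 1) * hω3
        - ((Q 2).eval 1) * (ω ^ 3 + 1) * hω3
    have z0 : (Q 0).eval 1 = 0 := by
      rcases mul_eq_zero.mp h30 with h' | h'
      · exact absurd h' h3ne'
      · exact h'
    have z1 : (Q 1).eval 1 = 0 := by
      rcases mul_eq_zero.mp h31 with h' | h'
      · exact absurd h' h3ne'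
      · exact h'
    have z2 : (Q 2).eval 1 = 0 := by
      rcases mul_eq_zero.mp h32 with h' | h'
      · exact absurd h' h3ne'
      · exact h'
    rcases hex2 with h | h | h <;> [exact h z0; exact h z1; exact h z2]
  · -- t = 2
    have eA := hvan 1 (one_pow 3) 5 (by omega) (by rw [map_one]; exact hd1)
    have eB := hvan ω hω3 3 (by omega) hdω
    have hfac12 : ((1 : ZMod p) - ω) * ((Q 1).eval 1 - ω ^ 2 * (Q 2).eval 1) = 0 := by
      linear_combination eA - eB + ((Q 2).eval 1) * hω3
    have h1ω : (1 : ZMod p) - ω ≠ 0 := sub_ne_zero.mpr (Ne.symm hω1)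
    have ha12 : (Q 1).eval 1 = ω ^ 2 * (Q 2).eval 1 := by
      rcases mul_eq_zero.mp hfac12 with h' | h'
      · exact absurd h' h1ω
      · exact sub_eq_zero.mp h'
    have ha02 : (Q 0).eval 1 = ω * (Q 2).eval 1 := by
      linear_combination eA - ha12 - ((Q 2).eval 1) * hsum
    have ha2ne : (Q 2).eval 1 ≠ 0 := by
      rcases hex2 with h | h | h
      · intro h2z; rw [h2z, mul_zero] at ha02; exact h ha02
      · intro h2z; rw [h2z, mul_zero] at ha12; exact h ha12
      · exact h
    have ha1ne : (Q 1).eval 1 ≠ 0 := by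
      rw [ha12]; exact mul_ne_zero (pow_ne_zero 2 hωne0) ha2ne
    have ha0ne : (Q 0).eval 1 ≠ 0 := by
      rw [ha02]; exact mul_ne_zero hωne0 ha2ne
    have b0 := hwtr 0 ha0ne
    have b1 := hwtr 1 ha1ne
    have b2 := hwtr 2 ha2ne
    omega
  · -- t = 3 or 4
    have eA := hvan 1 (one_pow 3) 5 (by omega) (by rw [map_one]; exact hd1)
    rcases eq_or_ne ((Q 0).eval 1) 0 with h0 | h0 <;>
      rcases eq_or_ne ((Q 1).eval 1) 0 with h1 | h1 <;>
      rcases eq_or_ne ((Q 2).eval 1) 0 with h2 | h2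
    · rcases hex2 with h | h | h
      · exact absurd h0 h
      · exact absurd h1 h
      · exact absurd h2 h
    · exact absurd (by linear_combination eA - h0 - h1) h2
    · exact absurd (by linear_combination eA - h0 - h2) h1
    · have b1 := hwtr 1 h1
      have b2 := hwtr 2 h2
      omega
    · exact absurd (by linear_combination eA - h1 - h2) h0
    · have b0 := hwtr 0 h0
      have b2 := hwtr 2 h2
      omega
    · have b0 := hwtr 0 h0
      have b1 := hwtr 1 h1
      omega
    · have b0 := hwtr 0 h0
      have b1 := hwtr 1 h1
      omega
  · -- 5 ≤ t
    rcases hex2 with h | h | h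
    · have := hwtr 0 h
      omega
    · have := hwtr 1 h
      omega
    · have := hwtr 2 h
      omega

theorem stmt10 (p : ℕ) [Fact p.Prime] (hodd : Odd p) (h3 : 3 ∣ p - 1)
    (ω : ZMod p) (hω3 : ω ^ 3 = 1) (hω1 : ω ≠ 1) :
    IsLeast {w : ℕ | ∃ c ∈ cyclicCode (3 * p)
        ((X - 1) ^ 5 * (X - C ω) ^ 3 * (X - C (ω ^ 2)) ^ 2),
      c ≠ 0 ∧ hammingWt c = w} 6 := by
  have hp : p.Prime := Fact.out
  have hp2 : p ≠ 2 := by rintro rfl; simp [Nat.odd_iff] at hodd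
  have hp3 : p ≠ 3 := by rintro rfl; norm_num at h3
  have hp5 : p ≠ 5 := by rintro rfl; norm_num at h3
  have hp4 : p ≠ 4 := by rintro rfl; norm_num at hp
  have hp6 : p ≠ 6 := by rintro rfl; norm_num at hp
  have h7 : 7 ≤ p := by have := hp.two_le; omega
  haveI : Fact (1 < p) := ⟨by omega⟩
  have hcast : ∀ n : ℕ, 0 < n → n ≤ 10 → ¬ p ∣ n → ((n : ℕ) : ZMod p) ≠ 0 := by
    intro n hn hle hnd h0
    rw [ZMod.natCast_eq_zero_iff] at h0
    exact hnd h0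
  have h3ne : ((3 : ℕ) : ZMod p) ≠ 0 := hcast 3 (by norm_num) (by norm_num)
    (fun hd => by have h' := Nat.le_of_dvd (by norm_num) hd; interval_cases p <;> revert hp hd <;> decide)
  have h5ne : ((5 : ℕ) : ZMod p) ≠ 0 := hcast 5 (by norm_num) (by norm_num)
    (fun hd => by have h' := Nat.le_of_dvd (by norm_num) hd; interval_cases p <;> revert hp hd <;> decide)
  have h10ne : ((10 : ℕ) : ZMod p) ≠ 0 := hcast 10 (by norm_num) (by norm_num)
    (fun hd => by have h' := Nat.le_of_dvd (by norm_num) hd; interval_cases p <;> revert hp hd <;> decide)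
  have hωne0 : ω ≠ 0 := by rintro rfl; norm_num at hω3
  have hsum : ω ^ 2 + ω + 1 = 0 := by
    have hfac : (ω - 1) * (ω ^ 2 + ω + 1) = 0 := by linear_combination hω3
    rcases mul_eq_zero.mp hfac with h | h
    · exact absurd (by linear_combination h) hω1
    · exact h
  have hω23 : (ω ^ 2) ^ 3 = 1 := by
    calc (ω ^ 2) ^ 3 = (ω ^ 3) ^ 2 := by ring
      _ = 1 := by rw [hω3]; norm_num
  constructor
  · exact aux_upper p h7 h5ne h10ne ω hω3 hω1 hsum
  · rintro w ⟨c, hmem, hc0, rfl⟩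
    simp only [cyclicCode, Set.mem_setOf_eq] at hmem
    exact aux_lower p h7 h3ne ω hω3 hω1 hsum hωne0 hω23 c hmem hc0
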